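/- For n full tanks and n empty tanks, there exists a finite sequence of pairwise equilibrations after which every originally full tank contains less than 2/√n units of water (equivalently, every originally empty tank contains more than 1 − 2/√n units), provided one also allows the operation of simultaneously averaging the contents of all red tanks and of all blue tanks. -/

import Mathlib

/-- Equilibrate all tanks in the set `S`: each tank in `S` gets the average of the
contents of `S`; the others are unchanged. A pairwise equilibration is the case `S.card = 2`. -/
noncomputable def groupEquil {α : Type*} [DecidableEq α] (S : Finset α) (v : α → ℝ) : α → ℝ :=
  fun a => if a ∈ S then (∑ b ∈ S, v b) / S.card else v a

namespace WaterTankAux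

open Finset

lemma groupEquil_mem {α : Type*} [DecidableEq α] {S : Finset α} {a : α} (v : α → ℝ)
    (ha : a ∈ S) : groupEquil S v a = (∑ b ∈ S, v b) / S.card := if_pos ha

lemma groupEquil_not_mem {α : Type*} [DecidableEq α] {S : Finset α} {a : α} (v : α → ℝ)
    (ha : a ∉ S) : groupEquil S v a = v a := if_neg ha

lemma groupEquil_pair_left {α : Type*} [DecidableEq α] {a b : α} (hab : a ≠ b) (v : α → ℝ) :
    groupEquil {a, b} v a = (v a + v b) / 2 := by
  rw [groupEquil_mem v (by simp), Finset.sum_pair hab, Finset.card_pair hab]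
  norm_num

lemma groupEquil_pair_right {α : Type*} [DecidableEq α] {a b : α} (hab : a ≠ b) (v : α → ℝ) :
    groupEquil {a, b} v b = (v a + v b) / 2 := by
  rw [groupEquil_mem v (by simp), Finset.sum_pair hab, Finset.card_pair hab]
  norm_num

lemma groupEquil_sum {α : Type*} [Fintype α] [DecidableEq α] (S : Finset α) (v : α → ℝ) :
    ∑ a, groupEquil S v a = ∑ a, v a := by
  rw [← Finset.sum_add_sum_compl S (groupEquil S v), ← Finset.sum_add_sum_compl S v]
  congr 1
  · rcases S.eq_empty_or_nonempty with h | h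
    · simp [h]
    · have hc : (S.card : ℝ) ≠ 0 := Nat.cast_ne_zero.mpr (Finset.card_ne_zero.mpr h)
      rw [Finset.sum_congr rfl (fun a ha => groupEquil_mem v ha), Finset.sum_const,
        nsmul_eq_mul, mul_div_cancel₀ _ hc]
  · exact Finset.sum_congr rfl fun a ha => groupEquil_not_mem v (by simpa using ha)

lemma foldl_groupEquil_sum {α : Type*} [Fintype α] [DecidableEq α]
    (L : List (Finset α)) (v : α → ℝ) :
    ∑ a, (L.foldl (fun w S => groupEquil S w) v) a = ∑ a, v a := by
  induction L generalizing v with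
  | nil => rfl
  | cons S L ih => rw [List.foldl_cons, ih, groupEquil_sum]

variable {n : ℕ}

/-- index into `Fin n` -/
def idx (hn : 0 < n) (i : ℕ) : Fin n := ⟨i % n, Nat.mod_lt _ hn⟩

lemma idx_val (hn : 0 < n) {i : ℕ} (h : i < n) : (idx hn i).val = i := Nat.mod_eq_of_lt h

/-- the pair consisting of red tank `i` and blue tank `j` -/
def pr (hn : 0 < n) (i j : ℕ) : Finset (Fin n ⊕ Fin n) :=
  {Sum.inl (idx hn i), Sum.inr (idx hn j)}

/-- the (prefix of length `t` of the) pass of red tank `i`: it meets blues `i, …, i+t-1` -/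
def pp (hn : 0 < n) (i t : ℕ) : List (Finset (Fin n ⊕ Fin n)) :=
  (List.range t).map fun s => pr hn i (i + s)

/-- passes of red tanks `0, …, i-1`, with window size `k` -/
def passes (hn : 0 < n) (k i : ℕ) : List (Finset (Fin n ⊕ Fin n)) :=
  (List.range i).flatMap fun i' => pp hn i' (min k (n - i'))

/-- run a list of moves -/
noncomputable def run (v : Fin n ⊕ Fin n → ℝ) (L : List (Finset (Fin n ⊕ Fin n))) : Fin n ⊕ Fin n → ℝ :=
  L.foldl (fun w S => groupEquil S w) v

lemma pass_inv (hn : 0 < n) (k i : ℕ) (hi : i < n) (w : Fin n ⊕ Fin n → ℝ)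
    (c : ℝ) (hc : c = 1 / (k + 1))
    (hw1 : w (Sum.inl (idx hn i)) = 1)
    (hwb : ∀ j : Fin n, i ≤ j.val →
      w (Sum.inr j) ≤ max 0 (1 - (((j.val - i : ℕ) : ℝ) + 2) * c)) :
    ∀ t, t ≤ min k (n - i) →
      (run w (pp hn i t) (Sum.inl (idx hn i)) ≤ 1 - t * c) ∧
      (∀ a, a ≠ Sum.inl (idx hn i) → (∀ s, s < t → a ≠ Sum.inr (idx hn (i + s))) →
        run w (pp hn i t) a = w a) ∧
      (∀ j : Fin n, i ≤ j.val → j.val < i + t →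
        run w (pp hn i t) (Sum.inr j) ≤ 1 - (((j.val - i : ℕ) : ℝ) + 1) * c) := by
  have hc0 : 0 < c := by rw [hc]; positivity
  intro t
  induction t with
  | zero =>
    intro _
    refine ⟨by simpa [run, pp] using hw1.le, fun a _ _ => by simp [run, pp],
      fun j h1 h2 => absurd h2 (by omega)⟩
  | succ t ih =>
    intro ht
    have ht' : t ≤ min k (n - i) := Nat.le_of_succ_le ht
    obtain ⟨iha, ihb, ihc⟩ := ih ht'
    have hit : i + t < n := by omega
    have htk : t + 1 ≤ k := by omega
    have hvA : (idx hn i).val = i := idx_val hn hi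
    have hvB : (idx hn (i + t)).val = i + t := idx_val hn hit
    set F := run w (pp hn i t) with hF
    have hstep : ∀ a, run w (pp hn i (t + 1)) a = groupEquil (pr hn i (i + t)) F a := by
      intro a
      rw [show pp hn i (t + 1) = pp hn i t ++ [pr hn i (i + t)] from by
        simp [pp, List.range_succ]]
      simp only [run, List.foldl_append]
      rfl
    have hABne : (Sum.inl (idx hn i) : Fin n ⊕ Fin n) ≠ Sum.inr (idx hn (i + t)) := by simp
    -- the blue about to be met was untouched during this pass so far
    have hFB : F (Sum.inr (idx hn (i + t))) = w (Sum.inr (idx hn (i + t))) := by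
      refine ihb _ (by simp) fun s hs h => ?_
      rw [Sum.inr.injEq] at h
      have hv := congrArg Fin.val h
      rw [hvB, idx_val hn (by omega)] at hv
      omega
    have htk' : ((t : ℝ) + 2) ≤ (k : ℝ) + 1 := by exact_mod_cast (by omega : t + 2 ≤ k + 1)
    have hck : ((k : ℝ) + 1) * c = 1 := by rw [hc]; field_simp
    have hwB : w (Sum.inr (idx hn (i + t))) ≤ 1 - ((t : ℝ) + 2) * c := by
      have h1 := hwb (idx hn (i + t)) (by omega)
      have h2 : ((idx hn (i + t)).val - i : ℕ) = t := by rw [hvB]; omega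
      rw [h2] at h1
      have h3 : (0 : ℝ) ≤ 1 - ((t : ℝ) + 2) * c := by nlinarith
      rwa [max_eq_right h3] at h1
    have hgA : groupEquil (pr hn i (i + t)) F (Sum.inl (idx hn i))
        = (F (Sum.inl (idx hn i)) + F (Sum.inr (idx hn (i + t)))) / 2 := by
      simp only [pr]; exact groupEquil_pair_left hABne F
    have hgB : groupEquil (pr hn i (i + t)) F (Sum.inr (idx hn (i + t)))
        = (F (Sum.inl (idx hn i)) + F (Sum.inr (idx hn (i + t)))) / 2 := by
      simp only [pr]; exact groupEquil_pair_right hABne F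
    have hnew : (F (Sum.inl (idx hn i)) + F (Sum.inr (idx hn (i + t)))) / 2
        ≤ 1 - ((t : ℝ) + 1) * c := by
      rw [hFB]
      have := iha
      linarith [hwB]
    refine ⟨?_, ?_, ?_⟩
    · rw [hstep, hgA]
      refine hnew.trans_eq ?_
      push_cast
      ring
    · intro a ha hs
      rw [hstep, groupEquil_not_mem]
      · exact ihb a ha fun s hs' => hs s (by omega)
      · simp only [pr, Finset.mem_insert, Finset.mem_singleton]
        push_neg
        exact ⟨ha, hs t (by omega)⟩
    · intro j hj1 hj2
      rw [hstep]
      rcases Nat.lt_or_ge j.val (i + t) with h | h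
      · -- untouched blue
        have hne : (Sum.inr j : Fin n ⊕ Fin n) ≠ Sum.inr (idx hn (i + t)) := by
          simp only [ne_eq, Sum.inr.injEq]
          intro hh
          have := congrArg Fin.val hh
          rw [hvB] at this
          omega
        rw [groupEquil_not_mem]
        · exact ihc j hj1 h
        · simp only [pr, Finset.mem_insert, Finset.mem_singleton]
          push_neg
          exact ⟨by simp, hne⟩
      · -- j is the blue just met
        have hj' : j.val = i + t := by omega
        have hjB : j = idx hn (i + t) := Fin.ext (by rw [hvB]; exact hj')
        rw [hjB, hgB]
        refine hnew.trans_eq ?_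
        have h2 : ((idx hn (i + t)).val - i : ℕ) = t := by rw [hvB]; omega
        rw [h2]

lemma main_inv (hn : 0 < n) (k : ℕ) (hk : 1 ≤ k) (v : Fin n ⊕ Fin n → ℝ)
    (hred : ∀ i, v (Sum.inl i) = 1) (hblue : ∀ j, v (Sum.inr j) = 0)
    (c : ℝ) (hc : c = 1 / (k + 1)) :
    ∀ i, i ≤ n →
      (∀ i' : Fin n, i ≤ i'.val → run v (passes hn k i) (Sum.inl i') = 1) ∧
      (∀ i' : Fin n, i'.val < i →
        run v (passes hn k i) (Sum.inl i') ≤ 1 - ((min k (n - i'.val) : ℕ) : ℝ) * c) ∧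
      (∀ j : Fin n, i ≤ j.val →
        run v (passes hn k i) (Sum.inr j) ≤ max 0 (1 - (((j.val - i : ℕ) : ℝ) + 2) * c)) := by
  have hc0 : 0 < c := by rw [hc]; positivity
  intro i
  induction i with
  | zero =>
    intro _
    refine ⟨fun i' _ => by simpa [run, passes] using hred i', fun i' hi' => absurd hi' (by omega),
      fun j _ => ?_⟩
    have : run v (passes hn k 0) (Sum.inr j) = 0 := by simpa [run, passes] using hblue j
    rw [this]
    exact le_max_left _ _
  | succ i ih =>
    intro hin
    have hi : i < n := by omega
    obtain ⟨h1, h2, h3⟩ := ih (by omega)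
    set w := run v (passes hn k i) with hw
    set m := min k (n - i) with hm
    have hsucc : ∀ a, run v (passes hn k (i + 1)) a = run w (pp hn i m) a := by
      intro a
      rw [show passes hn k (i + 1) = passes hn k i ++ pp hn i m from by
        simp [passes, List.range_succ, hm]]
      simp only [run, List.foldl_append]
      rfl
    have hvA : (idx hn i).val = i := idx_val hn hi
    obtain ⟨pa, pb, pc⟩ := pass_inv hn k i hi w c hc (h1 _ (by omega)) (fun j hj => h3 j hj)
      m le_rfl
    have hm1 : 1 ≤ m := by
      rw [hm]; exact le_min hk (by omega)
    refine ⟨?_, ?_, ?_⟩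
    · intro i' hi'
      rw [hsucc]
      rw [pb (Sum.inl i') ?_ (fun s hs => by simp)]
      · exact h1 i' (by omega)
      · simp only [ne_eq, Sum.inl.injEq]
        intro hh
        have := congrArg Fin.val hh
        omega
    · intro i' hi'
      rw [hsucc]
      rcases Nat.lt_or_ge i'.val i with h | h
      · rw [pb (Sum.inl i') ?_ (fun s hs => by simp)]
        · exact h2 i' h
        · simp only [ne_eq, Sum.inl.injEq]
          intro hh
          have := congrArg Fin.val hh
          omega
      · -- i' is the red that just did its pass
        have h' : i'.val = i := by omega
        have hiA : i' = idx hn i := Fin.ext (by rw [hvA]; exact h')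
        rw [hiA]
        refine pa.trans_eq ?_
        rw [hvA, ← hm]
    · intro j hj
      rw [hsucc]
      rcases lt_or_ge j.val (i + m) with h | h
      · have hb := pc j (by omega) h
        refine hb.trans (le_trans (le_of_eq ?_) (le_max_right _ _))
        have : ((j.val - i : ℕ) : ℝ) = ((j.val - (i + 1) : ℕ) : ℝ) + 1 := by
          norm_cast; omega
        rw [this]; ring
      · rw [pb (Sum.inr j) (by simp) ?_]
        · refine (h3 j (by omega)).trans (max_le_max le_rfl ?_)
          have hle : ((j.val - (i + 1) : ℕ) : ℝ) + 2 ≤ ((j.val - i : ℕ) : ℝ) + 2 := by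
            norm_cast; omega
          nlinarith
        · intro s hs hh
          rw [Sum.inr.injEq] at hh
          have := congrArg Fin.val hh
          rw [idx_val hn (by omega)] at this
          omega

end WaterTankAux

open WaterTankAux Finset in
set_option maxHeartbeats 1000000 in
theorem water_tank_transfer (n : ℕ) (hn : 0 < n) (v : Fin n ⊕ Fin n → ℝ)
    (hred : ∀ i, v (Sum.inl i) = 1) (hblue : ∀ j, v (Sum.inr j) = 0) :
    ∃ L : List (Finset (Fin n ⊕ Fin n)),
      (∀ S ∈ L, S.card = 2 ∨ S = Finset.univ.image Sum.inl ∨ S = Finset.univ.image Sum.inr) ∧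
      (∀ i : Fin n, (L.foldl (fun w S => groupEquil S w) v) (Sum.inl i) < 2 / Real.sqrt n) ∧
      (∀ j : Fin n, (L.foldl (fun w S => groupEquil S w) v) (Sum.inr j)
          > 1 - 2 / Real.sqrt n) := by
  classical
  set k := Nat.sqrt (n + 2) with hkdef
  have hksq : k ^ 2 ≤ n + 2 := Nat.sqrt_le' (n + 2)
  have hksq' : n + 2 < (k + 1) ^ 2 := Nat.lt_succ_sqrt' (n + 2)
  have hk1 : 1 ≤ k := by nlinarith
  have hkn : k ≤ n := by nlinarith
  set c : ℝ := 1 / (k + 1) with hcdef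
  have hc0 : 0 < c := by positivity
  obtain ⟨H1, H2, H3⟩ := main_inv hn k hk1 v hred hblue c hcdef n le_rfl
  set u := run v (passes hn k n) with hu
  set Rs := ∑ i : Fin n, u (Sum.inl i) with hRs
  -- bound on the total amount of water in red tanks
  have hstep1 : Rs ≤ ∑ i : Fin n, (1 - ((min k (n - i.val) : ℕ) : ℝ) * c) :=
    Finset.sum_le_sum fun i _ => H2 i i.isLt
  have hnatsum : k * (n - k + 1) ≤ ∑ i ∈ Finset.range n, min k (n - i) := by
    calc k * (n - k + 1) = ∑ _i ∈ Finset.range (n - k + 1), k := by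
          rw [Finset.sum_const, Finset.card_range, smul_eq_mul, mul_comm]
      _ ≤ ∑ i ∈ Finset.range (n - k + 1), min k (n - i) := by
          refine Finset.sum_le_sum fun i hi => ?_
          simp only [Finset.mem_range] at hi
          have hkni : k ≤ n - i := by omega
          rw [min_eq_left hkni]
      _ ≤ ∑ i ∈ Finset.range n, min k (n - i) :=
          Finset.sum_le_sum_of_subset (Finset.range_subset_range.mpr (by omega))
  have hsum2 : ∑ i : Fin n, (1 - ((min k (n - i.val) : ℕ) : ℝ) * c)
      = n - ((∑ i ∈ Finset.range n, min k (n - i) : ℕ) : ℝ) * c := by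
    rw [Finset.sum_sub_distrib, Finset.sum_const, Finset.card_univ, Fintype.card_fin,
      nsmul_eq_mul, mul_one, ← Finset.sum_mul]
    congr 2
    rw [Nat.cast_sum]
    exact Fin.sum_univ_eq_sum_range (fun i => ((min k (n - i) : ℕ) : ℝ)) n
  have hRs2 : Rs ≤ (n : ℝ) - ((k * (n - k + 1) : ℕ) : ℝ) * c := by
    rw [hsum2] at hstep1
    refine hstep1.trans ?_
    have : ((k * (n - k + 1) : ℕ) : ℝ) ≤ ((∑ i ∈ Finset.range n, min k (n - i) : ℕ) : ℝ) := by
      exact_mod_cast hnatsum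
    nlinarith
  -- the key arithmetic inequality
  have hn' : (0 : ℝ) < n := by exact_mod_cast hn
  have hs0 : 0 < Real.sqrt n := Real.sqrt_pos.mpr hn'
  have hs2 : Real.sqrt n * Real.sqrt n = n := Real.mul_self_sqrt hn'.le
  have hsK : Real.sqrt n < (k : ℝ) + 1 := by
    rw [Real.sqrt_lt' (by positivity)]
    have : (n : ℝ) + 2 < ((k : ℝ) + 1) ^ 2 := by exact_mod_cast hksq'
    nlinarith
  have hK2 : ((k : ℝ)) ^ 2 ≤ (n : ℝ) + 2 := by exact_mod_cast hksq
  have hKKn : ((k : ℝ)) ^ 2 - (k : ℝ) ≤ n := by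
    rcases Nat.lt_or_ge k 2 with h | h
    · have hk1' : k = 1 := by omega
      rw [hk1']; push_cast; nlinarith
    · have : (2 : ℝ) ≤ (k : ℝ) := by exact_mod_cast h
      nlinarith
  have hck : ((k : ℝ) + 1) * c = 1 := by rw [hcdef]; field_simp
  have hRs3 : Rs < 2 * Real.sqrt n := by
    have hcast : ((k * (n - k + 1) : ℕ) : ℝ) = (k : ℝ) * ((n : ℝ) - (k : ℝ) + 1) := by
      push_cast [Nat.cast_sub hkn]; ring
    rw [hcast] at hRs2
    refine hRs2.trans_lt ?_
    have hkey : ((n : ℝ) + (k : ℝ) ^ 2 - (k : ℝ)) < 2 * Real.sqrt n * ((k : ℝ) + 1) := by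
      nlinarith
    have hkpos : (0 : ℝ) < (k : ℝ) + 1 := by positivity
    nlinarith
  -- build the final list
  set redS : Finset (Fin n ⊕ Fin n) := Finset.univ.image Sum.inl with hredS
  set blueS : Finset (Fin n ⊕ Fin n) := Finset.univ.image Sum.inr with hblueS
  have hfold : (passes hn k n ++ [redS, blueS]).foldl (fun w S => groupEquil S w) v
      = groupEquil blueS (groupEquil redS u) := by
    rw [List.foldl_append, List.foldl_cons, List.foldl_cons, List.foldl_nil]
    rfl
  have hcard_red : (redS.card : ℝ) = n := by
    rw [hredS, Finset.card_image_of_injective _ Sum.inl_injective, Finset.card_univ,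
      Fintype.card_fin]
  have hcard_blue : (blueS.card : ℝ) = n := by
    rw [hblueS, Finset.card_image_of_injective _ Sum.inr_injective, Finset.card_univ,
      Fintype.card_fin]
  have hsum_red : ∑ a ∈ redS, u a = Rs := by
    rw [hredS]
    exact Finset.sum_image (by simp [Sum.inl_injective])
  have hinl_mem : ∀ i : Fin n, Sum.inl i ∈ redS := fun i =>
    Finset.mem_image_of_mem _ (Finset.mem_univ i)
  have hinr_mem : ∀ j : Fin n, Sum.inr j ∈ blueS := fun j =>
    Finset.mem_image_of_mem _ (Finset.mem_univ j)
  have hinl_nmem : ∀ i : Fin n, (Sum.inl i : Fin n ⊕ Fin n) ∉ blueS := by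
    intro i; rw [hblueS]; simp
  have hinr_nmem : ∀ j : Fin n, (Sum.inr j : Fin n ⊕ Fin n) ∉ redS := by
    intro j; rw [hredS]; simp
  have hfin_red : ∀ i : Fin n,
      groupEquil blueS (groupEquil redS u) (Sum.inl i) = Rs / n := by
    intro i
    rw [groupEquil_not_mem _ (hinl_nmem i), groupEquil_mem _ (hinl_mem i), hsum_red, hcard_red]
  have hsum_cons : ∑ a : Fin n ⊕ Fin n, u a = n := by
    have h1 : ∑ a : Fin n ⊕ Fin n, u a = ∑ a : Fin n ⊕ Fin n, v a :=
      foldl_groupEquil_sum _ v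
    rw [h1, Fintype.sum_sum_type]
    simp [hred, hblue]
  have hBs : ∑ j : Fin n, u (Sum.inr j) = n - Rs := by
    have h2 := hsum_cons
    rw [Fintype.sum_sum_type] at h2
    rw [← hRs] at h2
    linarith
  have hfin_blue : ∀ j : Fin n,
      groupEquil blueS (groupEquil redS u) (Sum.inr j) = ((n : ℝ) - Rs) / n := by
    intro j
    rw [groupEquil_mem _ (hinr_mem j)]
    have h3 : ∑ a ∈ blueS, groupEquil redS u a = ∑ a ∈ blueS, u a := by
      refine Finset.sum_congr rfl fun a ha => ?_
      rw [hblueS] at ha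
      simp only [Finset.mem_image, Finset.mem_univ, true_and] at ha
      obtain ⟨j', rfl⟩ := ha
      exact groupEquil_not_mem _ (hinr_nmem j')
    rw [h3, hcard_blue, hblueS, Finset.sum_image (by simp [Sum.inr_injective]), hBs]
  have hRdivn : Rs / n < 2 / Real.sqrt n := by
    rw [div_lt_div_iff₀ hn' hs0]
    nlinarith
  refine ⟨passes hn k n ++ [redS, blueS], ?_, ?_, ?_⟩
  · intro S hS
    rw [List.mem_append] at hS
    rcases hS with hS | hS
    · left
      simp only [passes, pp, List.mem_flatMap, List.mem_map, List.mem_range] at hS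
      obtain ⟨i', _, s, _, rfl⟩ := hS
      exact Finset.card_pair (by simp [pr])
    · right
      rcases List.mem_cons.mp hS with rfl | hS'
      · left; exact hredS
      · right
        rcases List.mem_singleton.mp hS' with rfl
        exact hblueS
  · intro i
    rw [hfold, hfin_red i]
    exact hRdivn
  · intro j
    rw [hfold, hfin_blue j]
    have h1 : ((n : ℝ) - Rs) / n = 1 - Rs / n := by field_simp
    rw [gt_iff_lt, h1]
    linarith
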